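/- Let G be a group, H ≤ G a subgroup, and Γ ≤ G a finite index subgroup. Then H is separable in G if and only if H ∩ Γ is separable in Γ. -/

import Mathlib

def Subgroup.IsSeparable {G : Type*} [Group G] (H : Subgroup G) : Prop :=
  ∀ g : G, g ∉ H → ∃ K : Subgroup G, K.FiniteIndex ∧ H ≤ K ∧ g ∉ K

theorem separable_iff_inter_finiteIndex {G : Type*} [Group G] (H Γ : Subgroup G)
    (hΓ : Γ.FiniteIndex) : H.IsSeparable ↔ (H.subgroupOf Γ).IsSeparable := by
  constructor
  · intro hsep g hg
    obtain ⟨K, hKfi, hHK, hgK⟩ := hsep (g : G) (by simpa [Subgroup.mem_subgroupOf] using hg)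
    refine ⟨K.subgroupOf Γ, ?_, fun x hx => hHK hx, by simpa [Subgroup.mem_subgroupOf] using hgK⟩
    constructor
    show K.relIndex Γ ≠ 0
    rw [← Subgroup.inf_relIndex_right]
    intro h0
    haveI := hKfi
    have hz : (K ⊓ Γ).index = 0 :=
      Nat.eq_zero_of_zero_dvd (h0 ▸ Subgroup.relIndex_dvd_index_of_le inf_le_right)
    exact (inferInstance : (K ⊓ Γ).FiniteIndex).index_ne_zero hz
  · intro hsep g hg
    haveI := hΓ
    haveI hN : Γ.normalCore.FiniteIndex := inferInstance
    by_cases hgN : g ∈ H ⊔ Γ.normalCore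
    · -- g ∈ H * N : extract the N-part and separate inside Γ
      rw [← SetLike.mem_coe, Subgroup.mul_normal] at hgN
      obtain ⟨h, hh, n, hn, rfl⟩ := hgN
      have hnΓ : n ∈ Γ := Γ.normalCore_le hn
      have hnH : n ∉ H := fun hnH => hg (H.mul_mem hh hnH)
      obtain ⟨L, hLfi, hHL, hnL⟩ := hsep ⟨n, hnΓ⟩ (by simpa [Subgroup.mem_subgroupOf] using hnH)
      set L' := L.map Γ.subtype with hL'
      have hL'Γ : L' ≤ Γ := by
        rintro x ⟨y, _, rfl⟩; exact y.2
      have hL'fi : L'.FiniteIndex := by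
        constructor
        have h1 : L'.relIndex Γ * Γ.index = L'.index := Subgroup.relIndex_mul_index hL'Γ
        have h2 : L'.relIndex Γ = L.index := by
          show (L'.subgroupOf Γ).index = L.index
          congr 1
          rw [hL', Subgroup.subgroupOf, Subgroup.comap_map_eq_self_of_injective
            Subtype.val_injective]
        rw [← h1, h2]
        exact Nat.mul_ne_zero hLfi.index_ne_zero hΓ.index_ne_zero
      haveI := hL'fi
      haveI hMfi : L'.normalCore.FiniteIndex := inferInstance
      refine ⟨H ⊔ L'.normalCore, Subgroup.finiteIndex_of_le le_sup_right, le_sup_left, ?_⟩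
      intro hmem
      rw [← SetLike.mem_coe, Subgroup.mul_normal] at hmem
      obtain ⟨h', hh', m, hm, heq⟩ := hmem
      have hmL' : m ∈ L' := L'.normalCore_le hm
      have hkey : h⁻¹ * h' ∈ H ⊓ Γ := by
        constructor
        · exact H.mul_mem (H.inv_mem hh) hh'
        · have heq' : h' * m = h * n := heq
          have hh'eq : h' = h * n * m⁻¹ := by rw [eq_mul_inv_iff_mul_eq]; exact heq'
          have e1 : h⁻¹ * h' = n * m⁻¹ := by rw [hh'eq]; group
          rw [e1]
          exact Γ.mul_mem hnΓ (Γ.inv_mem (hL'Γ hmL'))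
      have hL'n : n ∈ L' := by
        have h1 : h⁻¹ * h' ∈ L' := by
          have : (⟨h⁻¹ * h', hkey.2⟩ : Γ) ∈ L := hHL (by simpa [Subgroup.mem_subgroupOf] using hkey.1)
          exact ⟨_, this, rfl⟩
        have heq' : h' * m = h * n := heq
        have : n = (h⁻¹ * h') * m := by rw [mul_assoc, heq']; group
        rw [this]
        exact L'.mul_mem h1 hmL'
      apply hnL
      obtain ⟨y, hy, hyv⟩ := hL'n
      have : y = ⟨n, hnΓ⟩ := Subtype.ext hyv
      rwa [this] at hy
    · exact ⟨H ⊔ Γ.normalCore, Subgroup.finiteIndex_of_le le_sup_right, le_sup_left, hgN⟩
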